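/- For every n ≥ 1, every k ≥ 2, every ℓ ≥ 1, every assignment g : Fin n → Fin ℓ of bidders to expertise groups, and every shared-quality instance (valuations v_i(s) = f_i(q(s)) where q_j(s) = ∑_{i' : g(i')=j} s_{i'} and each f_i : ℕ^ℓ → ℝ is nonnegative and weakly increasing in every coordinate), there exists a mechanism (x, p) that is ex-post incentive compatible and ex-post individually rational and 5(k−1)ℓ-approximates welfare, i.e., for every signal profile s, ∑_i x_i(s)·v_i(s) ≥ (1/(5(k−1)ℓ))·max_i v_i(s). -/

import Mathlib

/-- For every `n ≥ 1`, `k ≥ 2`, `ℓ ≥ 1`, group assignment `g`, and every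
shared-quality instance (valuations `v i s = f i (q s)` with
`q s j = ∑_{i' : g i' = j} s i'` and each `f i` nonnegative and weakly increasing in
every coordinate), there exists an ex-post IC and ex-post IR mechanism `(x, p)` that
5(k-1)ℓ-approximates welfare. -/
theorem shared_quality_groups_welfare_approx
    (n k ℓ : ℕ) (hn : 1 ≤ n) (hk : 2 ≤ k) (hℓ : 1 ≤ ℓ)
    (g : Fin n → Fin ℓ)
    (f : Fin n → (Fin ℓ → ℕ) → ℝ)
    (hf_nonneg : ∀ i q, 0 ≤ f i q)
    (hf_mono : ∀ i, Monotone (f i))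
    (v : Fin n → (Fin n → Fin k) → ℝ)
    (hv : ∀ i s, v i s =
      f i (fun j => ∑ i' ∈ Finset.univ.filter (fun i' => g i' = j), (s i' : ℕ))) :
    ∃ x p : (Fin n → Fin k) → Fin n → ℝ,
      (∀ s i, 0 ≤ x s i) ∧ (∀ s, ∑ i, x s i ≤ 1) ∧
      (∀ s i, 0 ≤ p s i) ∧
      (∀ (i : Fin n) (s : Fin n → Fin k) (t : Fin k),
        x s i * v i s - p s i ≥
          x (Function.update s i t) i * v i s - p (Function.update s i t) i) ∧
      (∀ (i : Fin n) (s : Fin n → Fin k), x s i * v i s - p s i ≥ 0) ∧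
      (∀ s : Fin n → Fin k,
        ∑ i, x s i * v i s ≥
          (1 / (5 * ((k : ℝ) - 1) * (ℓ : ℝ))) *
            Finset.univ.sup' ⟨⟨0, hn⟩, Finset.mem_univ _⟩ (fun i => v i s)) := by
  classical
  -- quality vector
  set q : (Fin n → Fin k) → Fin ℓ → ℕ :=
    fun s j => ∑ i' ∈ Finset.univ.filter (fun i' => g i' = j), (s i' : ℕ) with hqdef
  have hv' : ∀ i s, v i s = f i (q s) := fun i s => hv i s
  -- masked quality with guess t for bidder i
  set u : (Fin n → Fin k) → Fin n → Fin k → Fin ℓ → ℕ :=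
    fun s i t j =>
      (∑ i' ∈ Finset.univ.filter (fun i' => g i' = j ∧ i' ≠ i), (s i' : ℕ)) +
        (if g i = j then (t : ℕ) else 0) with hudef
  -- argmax selection
  have hA : ∀ qv : Fin ℓ → ℕ, ∃ i : Fin n, ∀ i', f i' qv ≤ f i qv := by
    intro qv
    obtain ⟨i, -, hi⟩ := Finset.exists_max_image Finset.univ (fun i => f i qv)
      ⟨⟨0, hn⟩, Finset.mem_univ _⟩
    exact ⟨i, fun i' => hi i' (Finset.mem_univ _)⟩
  choose A hAspec using hA
  have hkR : (2 : ℝ) ≤ (k : ℝ) := by exact_mod_cast hk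
  have hℓR : (1 : ℝ) ≤ (ℓ : ℝ) := by exact_mod_cast hℓ
  set D : ℝ := (ℓ : ℝ) * (2 * (k : ℝ) - 1) with hDdef
  have hDpos : 0 < D := by
    apply mul_pos (by linarith) (by linarith)
  -- the key counting identity
  have key : ∀ (s : Fin n → Fin k) (i : Fin n) (t : Fin k) (j : Fin ℓ),
      u s i t j + (if g i = j then (s i : ℕ) else 0)
        = q s j + (if g i = j then (t : ℕ) else 0) := by
    intro s i t j
    show (∑ i' ∈ Finset.univ.filter (fun i' => g i' = j ∧ i' ≠ i), (s i' : ℕ))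
        + (if g i = j then (t : ℕ) else 0) + (if g i = j then (s i : ℕ) else 0)
      = (∑ i' ∈ Finset.univ.filter (fun i' => g i' = j), (s i' : ℕ))
        + (if g i = j then (t : ℕ) else 0)
    have hsum : (∑ i' ∈ Finset.univ.filter (fun i' => g i' = j ∧ i' ≠ i), (s i' : ℕ))
        + (if g i = j then (s i : ℕ) else 0)
      = ∑ i' ∈ Finset.univ.filter (fun i' => g i' = j), (s i' : ℕ) := by
      by_cases h : g i = j
      · rw [if_pos h]
        have hset : Finset.univ.filter (fun i' => g i' = j)
            = insert i (Finset.univ.filter (fun i' => g i' = j ∧ i' ≠ i)) := by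
          ext i'
          simp only [Finset.mem_filter, Finset.mem_univ, true_and, Finset.mem_insert]
          by_cases h' : i' = i
          · subst h'; simp [h]
          · simp [h']
        rw [hset, Finset.sum_insert (by simp)]
        ring
      · rw [if_neg h, add_zero]
        apply Finset.sum_congr _ (fun _ _ => rfl)
        ext i'
        simp only [Finset.mem_filter, Finset.mem_univ, true_and]
        constructor
        · exact fun ⟨h1, _⟩ => h1
        · intro h1
          exact ⟨h1, fun e => h (e ▸ h1)⟩
    omega
  have hutruth : ∀ (s : Fin n → Fin k) (i : Fin n), u s i (s i) = q s := by
    intro s i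
    funext j
    have h := key s i (s i) j
    omega
  -- the mechanism
    -- x s i = (#{t | A (u s i t) = i}) / D ; p = 0
  refine ⟨fun s i => (∑ t : Fin k, if A (u s i t) = i then (1 : ℝ) else 0) / D,
    fun _ _ => 0, ?_, ?_, ?_, ?_, ?_, ?_⟩
  · intro s i
    apply div_nonneg _ hDpos.le
    apply Finset.sum_nonneg
    intro t _
    split <;> norm_num
  · -- feasibility
    intro s
    rw [← Finset.sum_div, div_le_one hDpos]
    have hcard : (∑ i, ∑ t : Fin k, if A (u s i t) = i then (1 : ℝ) else 0)
        = ((Finset.univ.filter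
            (fun p : Fin n × Fin k => A (u s p.1 p.2) = p.1)).card : ℝ) := by
      rw [← Finset.sum_boole, ← Finset.univ_product_univ, Finset.sum_product]
    rw [hcard]
    have hbound : (Finset.univ.filter
        (fun p : Fin n × Fin k => A (u s p.1 p.2) = p.1)).card
        ≤ (Finset.univ ×ˢ Finset.Icc (-(k : ℤ) + 1) ((k : ℤ) - 1) :
            Finset (Fin ℓ × ℤ)).card := by
      apply Finset.card_le_card_of_injOn
        (fun p => (g p.1, ((p.2 : ℕ) : ℤ) - ((s p.1 : ℕ) : ℤ)))
      · rintro ⟨i, t⟩ -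
        simp only [Finset.coe_product, Finset.coe_univ, Set.mem_prod, Set.mem_univ,
          Finset.mem_coe, Finset.mem_product, Finset.mem_univ, true_and, Finset.mem_Icc]
        have h1 : (t : ℕ) < k := t.isLt
        have h2 : (s i : ℕ) < k := (s i).isLt
        omega
      · rintro ⟨i, t⟩ hmem ⟨i', t'⟩ hmem' heq
        simp only [Finset.coe_filter, Set.mem_setOf_eq, Finset.mem_univ, true_and]
          at hmem hmem'
        simp only [Prod.mk.injEq] at heq
        obtain ⟨hgg, htz⟩ := heq
        have huu : u s i t = u s i' t' := by
          funext j
          have h1 := key s i t j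
          have h2 := key s i' t' j
          by_cases hj : g i = j
          · rw [if_pos hj, if_pos hj] at h1
            rw [if_pos (hgg ▸ hj), if_pos (hgg ▸ hj)] at h2
            omega
          · rw [if_neg hj, if_neg hj, add_zero, add_zero] at h1
            have hj' : ¬ g i' = j := fun e => hj (hgg ▸ e)
            rw [if_neg hj', if_neg hj', add_zero, add_zero] at h2
            omega
        have hii : i = i' := by
          rw [← hmem, ← hmem', huu]
        subst hii
        have : t = t' := by
          have : (t : ℕ) = (t' : ℕ) := by omega
          exact Fin.ext this
        subst this
        rfl
    have hBcard : ((Finset.univ ×ˢ Finset.Icc (-(k : ℤ) + 1) ((k : ℤ) - 1) :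
        Finset (Fin ℓ × ℤ)).card : ℝ) = D := by
      rw [Finset.card_product, Finset.card_univ, Fintype.card_fin, Int.card_Icc]
      have : ((k : ℤ) - 1 + 1 - (-(k : ℤ) + 1)).toNat = 2 * k - 1 := by omega
      rw [this]
      have h1 : (1 : ℕ) ≤ 2 * k := by omega
      push_cast [Nat.cast_sub h1]
      ring
    calc ((Finset.univ.filter
        (fun p : Fin n × Fin k => A (u s p.1 p.2) = p.1)).card : ℝ)
        ≤ ((Finset.univ ×ˢ Finset.Icc (-(k : ℤ) + 1) ((k : ℤ) - 1) :
            Finset (Fin ℓ × ℤ)).card : ℝ) := by exact_mod_cast hbound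
      _ = D := hBcard
  · intro s i; exact le_rfl
  · -- IC
    intro i s t
    have hux : ∀ t' : Fin k, u (Function.update s i t) i t' = u s i t' := by
      intro t'
      funext j
      show (∑ i' ∈ Finset.univ.filter (fun i' => g i' = j ∧ i' ≠ i),
          ((Function.update s i t i' : Fin k) : ℕ)) + _ = _
      congr 1
      apply Finset.sum_congr rfl
      intro i' hi'
      simp only [Finset.mem_filter, Finset.mem_univ, true_and] at hi'
      rw [Function.update_of_ne hi'.2]
    simp only [hux]
    exact le_rfl
  · -- IR
    intro i s
    have h1 : 0 ≤ (∑ t : Fin k, if A (u s i t) = i then (1 : ℝ) else 0) / D := by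
      apply div_nonneg _ hDpos.le
      apply Finset.sum_nonneg
      intro t _
      split <;> norm_num
    have h2 : 0 ≤ v i s := by rw [hv']; exact hf_nonneg _ _
    simp only [sub_zero]
    exact mul_nonneg h1 h2
  · -- welfare
    intro s
    set iA := A (q s) with hiA
    have hvnn : ∀ i, 0 ≤ v i s := fun i => by rw [hv']; exact hf_nonneg _ _
    have hsup : Finset.univ.sup' ⟨⟨0, hn⟩, Finset.mem_univ _⟩ (fun i => v i s)
        ≤ v iA s := by
      apply Finset.sup'_le
      intro i _
      rw [hv', hv']
      exact hAspec (q s) i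
    have hxnn : ∀ i, 0 ≤ (∑ t : Fin k, if A (u s i t) = i then (1 : ℝ) else 0) / D := by
      intro i
      apply div_nonneg _ hDpos.le
      apply Finset.sum_nonneg
      intro t _
      split <;> norm_num
    have hS : (1 : ℝ) ≤ ∑ t : Fin k, if A (u s iA t) = iA then (1 : ℝ) else 0 := by
      have hterm : (if A (u s iA (s iA)) = iA then (1 : ℝ) else 0) = 1 := by
        rw [hutruth]
        exact if_pos rfl
      calc (1 : ℝ) = (if A (u s iA (s iA)) = iA then (1 : ℝ) else 0) := hterm.symm
        _ ≤ ∑ t : Fin k, if A (u s iA t) = iA then (1 : ℝ) else 0 :=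
          Finset.single_le_sum
            (f := fun t : Fin k => if A (u s iA t) = iA then (1 : ℝ) else 0)
            (fun t _ => by split <;> norm_num) (Finset.mem_univ (s iA))
    have hxA : 1 / D ≤ (∑ t : Fin k, if A (u s iA t) = iA then (1 : ℝ) else 0) / D :=
      (div_le_div_iff_of_pos_right hDpos).mpr hS
    set E : ℝ := 5 * ((k : ℝ) - 1) * (ℓ : ℝ) with hEdef
    have hEpos : 0 < E := by nlinarith
    have hDE : D ≤ E := by nlinarith
    have h1E : 1 / E ≤ 1 / D := one_div_le_one_div_of_le hDpos hDE
    have hsum : ((∑ t : Fin k, if A (u s iA t) = iA then (1 : ℝ) else 0) / D) * v iA s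
        ≤ ∑ i, ((∑ t : Fin k, if A (u s i t) = i then (1 : ℝ) else 0) / D) * v i s :=
      Finset.single_le_sum (fun i _ => mul_nonneg (hxnn i) (hvnn i)) (Finset.mem_univ iA)
    calc (1 / E) * Finset.univ.sup' ⟨⟨0, hn⟩, Finset.mem_univ _⟩ (fun i => v i s)
        ≤ (1 / E) * v iA s :=
          mul_le_mul_of_nonneg_left hsup (by positivity)
      _ ≤ (1 / D) * v iA s := mul_le_mul_of_nonneg_right h1E (hvnn iA)
      _ ≤ ((∑ t : Fin k, if A (u s iA t) = iA then (1 : ℝ) else 0) / D) * v iA s :=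
          mul_le_mul_of_nonneg_right hxA (hvnn iA)
      _ ≤ ∑ i, ((∑ t : Fin k, if A (u s i t) = i then (1 : ℝ) else 0) / D) * v i s := hsum
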